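/- For every odd natural number n ≥ 1, the complex derivative at q = Complex.I of the function q ↦ q^{1−n} · P_n(q) (defined on ℂ ∖ {0}; this is the quantum integer [n] = (q^n − q^{−n})/(q − q^{−1}) as a function of q) equals 0. -/

import Mathlib

open Polynomial Finset

/-- The polynomial form `P_n(X) = ∑_{k=0}^{n-1} X^{2k}` of the quantum integer `[n]`. -/
noncomputable def quantumP (n : ℕ) : Polynomial ℂ :=
  ∑ k ∈ Finset.range n, Polynomial.X ^ (2 * k)

lemma aux_sum (m : ℕ) :
    ∑ k ∈ Finset.range (2*m+1), (2*(k:ℂ) - 2*m) * (-1)^k = 0 := by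
  induction m with
  | zero => simp
  | succ m ih =>
    have h2 : 2*(m+1)+1 = (2*m+1) + 1 + 1 := by ring
    rw [h2, Finset.sum_range_succ, Finset.sum_range_succ]
    have hsplit : ∑ k ∈ Finset.range (2*m+1), (2*(k:ℂ) - 2*(m+1:ℕ)) * (-1)^k
        = (∑ k ∈ Finset.range (2*m+1), (2*(k:ℂ) - 2*m) * (-1)^k)
          - 2 * ∑ k ∈ Finset.range (2*m+1), (-1:ℂ)^k := by
      rw [Finset.mul_sum, ← Finset.sum_sub_distrib]
      refine Finset.sum_congr rfl fun k _ => ?_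
      push_cast; ring
    have hgeom : ∑ k ∈ Finset.range (2*m+1), (-1:ℂ)^k = 1 := by
      rw [neg_one_geom_sum]
      simp [Nat.even_add_one, parity_simps]
    have hp1 : (-1:ℂ)^(2*m+1) = -1 := Odd.neg_one_pow ⟨m, by ring⟩
    have hp2 : (-1:ℂ)^(2*m+1+1) = 1 := by rw [pow_succ, hp1]; ring
    rw [hsplit, ih, hgeom, hp1, hp2]
    push_cast
    ring

/-- For odd `n ≥ 1`, the complex derivative at `q = i` of the quantum integer
`[n](q) = q^{1−n} · P_n(q)` vanishes. -/
theorem deriv_quantum_int_odd_at_I (n : ℕ) (hn : 1 ≤ n) (hodd : Odd n) :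
    deriv (fun q : ℂ => q ^ (1 - (n : ℤ)) * (quantumP n).eval q) Complex.I = 0 := by
  have hI : (Complex.I) ≠ 0 := Complex.I_ne_zero
  have heq : (fun q : ℂ => q ^ (1 - (n : ℤ)) * (quantumP n).eval q)
      =ᶠ[nhds Complex.I] (fun q : ℂ => ∑ k ∈ Finset.range n, q ^ (1 - (n:ℤ) + 2*k)) := by
    filter_upwards [IsOpen.mem_nhds isOpen_compl_singleton hI] with q hq
    simp only [Set.mem_compl_iff, Set.mem_singleton_iff] at hq
    simp only [quantumP, Polynomial.eval_finset_sum, Polynomial.eval_pow, Polynomial.eval_X,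
      Finset.mul_sum]
    refine Finset.sum_congr rfl fun k _ => ?_
    rw [zpow_add₀ hq]
    congr 1
  rw [heq.deriv_eq]
  have hderiv : HasDerivAt (fun q : ℂ => ∑ k ∈ Finset.range n, q ^ (1 - (n:ℤ) + 2*k))
      (∑ k ∈ Finset.range n, (((1 - (n:ℤ) + 2*k) : ℤ) : ℂ) * Complex.I ^ (1 - (n:ℤ) + 2*k - 1))
      Complex.I :=
    HasDerivAt.fun_sum fun k _ => hasDerivAt_zpow _ _ (Or.inl hI)
  rw [hderiv.deriv]
  obtain ⟨m, rfl⟩ := hodd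
  have key : ∀ k ∈ Finset.range (2*m+1),
      (((1 - ((2*m+1 : ℕ):ℤ) + 2*k) : ℤ) : ℂ) * Complex.I ^ (1 - ((2*m+1:ℕ):ℤ) + 2*k - 1)
      = Complex.I ^ (-(((2*m+1:ℕ):ℤ))) * ((2*(k:ℂ) - 2*m) * (-1)^k) := by
    intro k _
    have he : (1 - ((2*m+1:ℕ):ℤ) + 2*k - 1) = ((2*k : ℕ) : ℤ) + (-(((2*m+1:ℕ):ℤ))) := by
      push_cast; ring
    rw [he, zpow_add₀ hI, zpow_natCast, pow_mul, Complex.I_sq]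
    push_cast
    ring
  rw [Finset.sum_congr rfl key, ← Finset.mul_sum, aux_sum, mul_zero]
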